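/- For σ ∈ (0,1), the range of k(c²,σ) = √(1 + σ(1/2 − (3/2)c²))/(1 − σ(1/2 − 3c²)) over c² ∈ [0,1] is the closed interval [√(1−σ)/(1+(5/2)σ), √(1+σ/2)/(1−σ/2)]; in particular every k in this interval is attained by exactly one inclination. -/
import Mathlib


open Real

theorem frequency_ratio_range (σ : ℝ) (hσ : σ ∈ Set.Ioo (0:ℝ) 1) :
    (fun x : ℝ => Real.sqrt (1 + σ * (1/2 - (3/2) * x)) / (1 - σ * (1/2 - 3 * x))) ''
        Set.Icc 0 1
      = Set.Icc (Real.sqrt (1 - σ) / (1 + (5/2)*σ)) (Real.sqrt (1 + σ/2) / (1 - σ/2)) ∧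
    Set.InjOn
      (fun x : ℝ => Real.sqrt (1 + σ * (1/2 - (3/2) * x)) / (1 - σ * (1/2 - 3 * x)))
      (Set.Icc 0 1) := by
  obtain ⟨hσ0, hσ1⟩ := hσ
  set f : ℝ → ℝ := fun x : ℝ =>
    Real.sqrt (1 + σ * (1/2 - (3/2) * x)) / (1 - σ * (1/2 - 3 * x)) with hf
  have hN : ∀ x ∈ Set.Icc (0:ℝ) 1, 0 < 1 + σ * (1/2 - (3/2) * x) := by
    intro x hx
    obtain ⟨hx0, hx1⟩ := hx
    nlinarith
  have hD : ∀ x ∈ Set.Icc (0:ℝ) 1, 0 < 1 - σ * (1/2 - 3 * x) := by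
    intro x hx
    obtain ⟨hx0, hx1⟩ := hx
    nlinarith
  have hanti : StrictAntiOn f (Set.Icc 0 1) := by
    intro x hx y hy hxy
    have hNx := hN x hx
    have hNy := hN y hy
    have hDx := hD x hx
    have hDy := hD y hy
    have hs : Real.sqrt (1 + σ * (1/2 - (3/2) * y)) < Real.sqrt (1 + σ * (1/2 - (3/2) * x)) := by
      apply Real.sqrt_lt_sqrt hNy.le
      nlinarith
    have hsx : 0 < Real.sqrt (1 + σ * (1/2 - (3/2) * x)) := Real.sqrt_pos.mpr hNx
    have hDxy : 1 - σ * (1/2 - 3 * x) < 1 - σ * (1/2 - 3 * y) := by nlinarith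
    show f y < f x
    simp only [hf]
    calc Real.sqrt (1 + σ * (1/2 - (3/2) * y)) / (1 - σ * (1/2 - 3 * y))
        < Real.sqrt (1 + σ * (1/2 - (3/2) * x)) / (1 - σ * (1/2 - 3 * y)) := by
          exact div_lt_div_of_pos_right hs hDy
      _ ≤ Real.sqrt (1 + σ * (1/2 - (3/2) * x)) / (1 - σ * (1/2 - 3 * x)) := by
          apply div_le_div_of_nonneg_left hsx.le hDx hDxy.le
  have hcont : ContinuousOn f (Set.Icc 0 1) := by
    apply ContinuousOn.div
    · exact (Real.continuous_sqrt.comp (by continuity)).continuousOn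
    · exact (by continuity : Continuous fun x : ℝ => 1 - σ * (1/2 - 3 * x)).continuousOn
    · intro x hx; exact (hD x hx).ne'
  have h0 : (0:ℝ) ∈ Set.Icc (0:ℝ) 1 := by norm_num
  have h1 : (1:ℝ) ∈ Set.Icc (0:ℝ) 1 := by norm_num
  have hf0 : f 0 = Real.sqrt (1 + σ/2) / (1 - σ/2) := by
    simp only [hf]; norm_num; ring_nf
  have hf1 : f 1 = Real.sqrt (1 - σ) / (1 + (5/2)*σ) := by
    simp only [hf]; norm_num
    rw [show (1:ℝ) + -σ = 1 - σ by ring]; ring_nf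
  constructor
  · apply Set.Subset.antisymm
    · rintro _ ⟨x, hx, rfl⟩
      constructor
      · rw [← hf1]
        rcases eq_or_lt_of_le hx.2 with h | h
        · rw [h]
        · exact (hanti hx h1 h).le
      · rw [← hf0]
        rcases eq_or_lt_of_le hx.1 with h | h
        · rw [← h]
        · exact (hanti h0 hx h).le
    · have := intermediate_value_Icc' (by norm_num : (0:ℝ) ≤ 1) hcont
      rw [hf0, hf1] at this
      exact this
  · exact hanti.injOn
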